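/- Let H be a real Hilbert space, let 0 < α < α₂, write ⟨x⟩ := (1 + x²)^{1/2}, and let f : ℝ → H be continuously differentiable with ‖e^{−α⟨·⟩} f‖_{L²(ℝ,H)} < ∞ and ‖e^{−α₂⟨·⟩} f'‖_{L²(ℝ,H)} < ∞. Then for every x ∈ ℝ: e^{−2α₂⟨x⟩} ‖f(x)‖² ≤ 2 e^{−(α₂−α)⟨x⟩} ‖e^{−α⟨·⟩} f‖_{L²((x,∞),H)} · ( ‖e^{−α₂⟨·⟩} f'‖_{L²((x,∞),H)} + α₂ ‖e^{−α₂⟨·⟩} f‖_{L²((x,∞),H)} ), where in particular the last factor is finite since e^{−α₂⟨y⟩} ≤ e^{−α⟨y⟩}. -/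

import Mathlib

open MeasureTheory
open scoped RealInnerProductSpace

set_option synthInstance.maxHeartbeats 400000
set_option maxHeartbeats 1000000

/-- The Japanese bracket `⟨x⟩ = (1 + x²)^{1/2}`. -/
noncomputable def jbracket (x : ℝ) : ℝ := Real.sqrt (1 + x ^ 2)

lemma jbracket_pos (x : ℝ) : 0 < jbracket x :=
  Real.sqrt_pos.2 (by positivity)

lemma one_le_jbracket (x : ℝ) : 1 ≤ jbracket x := by
  have h := Real.sqrt_le_sqrt (show (1:ℝ) ≤ 1 + x ^ 2 by nlinarith [sq_nonneg x])
  rwa [Real.sqrt_one] at h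

lemma jbracket_nonneg (x : ℝ) : 0 ≤ jbracket x := (jbracket_pos x).le

lemma abs_div_jbracket_le_one (x : ℝ) : |x / jbracket x| ≤ 1 := by
  rw [abs_div, abs_of_pos (jbracket_pos x), div_le_one (jbracket_pos x)]
  have : |x| = Real.sqrt (x ^ 2) := (Real.sqrt_sq_eq_abs x).symm
  rw [this]
  exact Real.sqrt_le_sqrt (by linarith)

lemma continuous_jbracket : Continuous jbracket :=
  Real.continuous_sqrt.comp (by continuity)

lemma hasDerivAt_jbracket (y : ℝ) : HasDerivAt jbracket (y / jbracket y) y := by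
  have h1 : HasDerivAt (fun y : ℝ => 1 + y ^ 2) (2 * y) y := by
    simpa using ((hasDerivAt_pow 2 y).const_add 1)
  have hpos : (0:ℝ) < 1 + y ^ 2 := by positivity
  have h2 := (Real.hasDerivAt_sqrt hpos.ne').comp y h1
  have h3 : 1 / (2 * Real.sqrt (1 + y ^ 2)) * (2 * y) = y / jbracket y := by
    have hne : Real.sqrt (1 + y ^ 2) ≠ 0 := (Real.sqrt_pos.2 hpos).ne'
    rw [jbracket]
    field_simp
  have h4 : HasDerivAt (fun y : ℝ => Real.sqrt (1 + y ^ 2)) (y / jbracket y) y := h3 ▸ h2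
  exact h4

lemma exp_sq (t : ℝ) : Real.exp t ^ 2 = Real.exp (2 * t) := by
  rw [sq, ← Real.exp_add]; ring_nf

lemma cs_integral {μ : Measure ℝ} {a b : ℝ → ℝ}
    (hma : AEStronglyMeasurable a μ) (hmb : AEStronglyMeasurable b μ)
    (hpa : ∀ y, 0 ≤ a y) (hpb : ∀ y, 0 ≤ b y)
    (ha2 : Integrable (fun y => a y ^ 2) μ) (hb2 : Integrable (fun y => b y ^ 2) μ) :
    ∫ y, a y * b y ∂μ ≤ Real.sqrt (∫ y, a y ^ 2 ∂μ) * Real.sqrt (∫ y, b y ^ 2 ∂μ) := by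
  have hpq : Real.HolderConjugate 2 2 := by constructor <;> norm_num
  have hA : MemLp a (ENNReal.ofReal 2) μ := by
    rw [show ENNReal.ofReal 2 = 2 by norm_num]
    exact (memLp_two_iff_integrable_sq hma).2 ha2
  have hB : MemLp b (ENNReal.ofReal 2) μ := by
    rw [show ENNReal.ofReal 2 = 2 by norm_num]
    exact (memLp_two_iff_integrable_sq hmb).2 hb2
  have h := integral_mul_le_Lp_mul_Lq_of_nonneg hpq (ae_of_all _ hpa) (ae_of_all _ hpb) hA hB
  have e1 : ∀ g : ℝ → ℝ, (∫ y, g y ^ (2:ℝ) ∂μ) = ∫ y, g y ^ 2 ∂μ := by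
    intro g; congr 1; funext y
    rw [show (2:ℝ) = ((2:ℕ):ℝ) by norm_num, Real.rpow_natCast]
  rw [e1 a, e1 b] at h
  calc ∫ y, a y * b y ∂μ ≤ (∫ y, a y ^ 2 ∂μ) ^ (1/(2:ℝ)) * (∫ y, b y ^ 2 ∂μ) ^ (1/(2:ℝ)) := h
    _ = Real.sqrt (∫ y, a y ^ 2 ∂μ) * Real.sqrt (∫ y, b y ^ 2 ∂μ) := by
        rw [Real.sqrt_eq_rpow, Real.sqrt_eq_rpow]

/-- **Weighted one-dimensional Sobolev pointwise bound.**
For `0 < α < α₂` and `f` C¹ with `e^{−α⟨·⟩}f ∈ L²` and `e^{−α₂⟨·⟩}f' ∈ L²`, one has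
`e^{−2α₂⟨x⟩}‖f(x)‖² ≤ 2 e^{−(α₂−α)⟨x⟩} ‖e^{−α⟨·⟩}f‖_{L²(x,∞)}
 (‖e^{−α₂⟨·⟩}f'‖_{L²(x,∞)} + α₂ ‖e^{−α₂⟨·⟩}f‖_{L²(x,∞)})` for every `x`. -/
theorem weighted_sobolev_pointwise
    {H : Type*} [NormedAddCommGroup H] [InnerProductSpace ℝ H]
    (α α₂ : ℝ) (hα : 0 < α) (hαα₂ : α < α₂)
    (f : ℝ → H) (hf : ContDiff ℝ 1 f)
    (hfL2 : Integrable (fun y : ℝ => Real.exp (-(2 * α) * jbracket y) * ‖f y‖ ^ 2))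
    (hf'L2 : Integrable
      (fun y : ℝ => Real.exp (-(2 * α₂) * jbracket y) * ‖deriv f y‖ ^ 2)) :
    ∀ x : ℝ,
      Real.exp (-(2 * α₂) * jbracket x) * ‖f x‖ ^ 2 ≤
        2 * Real.exp (-(α₂ - α) * jbracket x) *
          Real.sqrt (∫ y in Set.Ioi x, Real.exp (-(2 * α) * jbracket y) * ‖f y‖ ^ 2) *
          (Real.sqrt
              (∫ y in Set.Ioi x,
                Real.exp (-(2 * α₂) * jbracket y) * ‖deriv f y‖ ^ 2) +
            α₂ *
              Real.sqrt
                (∫ y in Set.Ioi x,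
                  Real.exp (-(2 * α₂) * jbracket y) * ‖f y‖ ^ 2)) := by
  intro x
  have hfc : Continuous f := hf.continuous
  have hf'c : Continuous (deriv f) := hf.continuous_deriv le_rfl
  have hfd : ∀ y, HasDerivAt f (deriv f y) y := fun y =>
    (hf.differentiable one_ne_zero y).hasDerivAt
  have hcsum : (0:ℝ) < α + α₂ := by linarith
  -- local abbreviations
  set E : ℝ → ℝ := fun y => Real.exp (-(α + α₂) * jbracket y) with hE_def
  set h : ℝ → ℝ := fun y => E y * ⟪f y, f y⟫ with hh_def
  set h' : ℝ → ℝ := fun y =>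
    E y * (-(α + α₂) * (y / jbracket y)) * ⟪f y, f y⟫ +
      E y * (⟪f y, deriv f y⟫ + ⟪deriv f y, f y⟫) with hh'_def
  set F : ℝ → ℝ := fun y =>
    (α + α₂) * ((Real.exp (-α * jbracket y) * ‖f y‖) *
        (Real.exp (-α₂ * jbracket y) * ‖f y‖)) +
      2 * ((Real.exp (-α * jbracket y) * ‖f y‖) *
        (Real.exp (-α₂ * jbracket y) * ‖deriv f y‖)) with hF_def
  -- derivative computations
  have hE_deriv : ∀ y, HasDerivAt E (E y * (-(α + α₂) * (y / jbracket y))) y := fun y =>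
    ((hasDerivAt_jbracket y).const_mul (-(α + α₂))).exp
  have hip : ∀ y, HasDerivAt (fun t => ⟪f t, f t⟫)
      (⟪f y, deriv f y⟫ + ⟪deriv f y, f y⟫) y := fun y =>
    (hfd y).inner ℝ (hfd y)
  have hhd : ∀ y, HasDerivAt h (h' y) y := fun y => (hE_deriv y).mul (hip y)
  -- continuity facts
  have hcont_q : Continuous fun y : ℝ => y / jbracket y :=
    continuous_id.div continuous_jbracket fun y => (jbracket_pos y).ne'
  have hcontE : Continuous E :=
    Real.continuous_exp.comp (continuous_const.mul continuous_jbracket : Continuous fun y => -(α + α₂) * jbracket y)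
  have hcontip : Continuous fun y => ⟪f y, f y⟫ := hfc.inner hfc
  have hcontip1 : Continuous fun y => ⟪f y, deriv f y⟫ := hfc.inner hf'c
  have hcontip2 : Continuous fun y => ⟪deriv f y, f y⟫ := hf'c.inner hfc
  have hcont_h' : Continuous h' :=
    ((hcontE.mul (continuous_const.mul hcont_q : Continuous fun y => -(α + α₂) * (y / jbracket y))).mul hcontip).add
      (hcontE.mul (hcontip1.add hcontip2))
  have hca : Continuous fun y => Real.exp (-α * jbracket y) * ‖f y‖ :=
    (Real.continuous_exp.comp (continuous_const.mul continuous_jbracket : Continuous fun y => -α * jbracket y)).mul hfc.norm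
  have hcb : Continuous fun y => Real.exp (-α₂ * jbracket y) * ‖f y‖ :=
    (Real.continuous_exp.comp (continuous_const.mul continuous_jbracket : Continuous fun y => -α₂ * jbracket y)).mul hfc.norm
  have hcb' : Continuous fun y => Real.exp (-α₂ * jbracket y) * ‖deriv f y‖ :=
    (Real.continuous_exp.comp (continuous_const.mul continuous_jbracket : Continuous fun y => -α₂ * jbracket y)).mul hf'c.norm
  have hcontF : Continuous F :=
    (continuous_const.mul (hca.mul hcb)).add (continuous_const.mul (hca.mul hcb'))
  -- pointwise bound |h'| ≤ F
  have hEsplit : ∀ y, E y = Real.exp (-α * jbracket y) * Real.exp (-α₂ * jbracket y) := by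
    intro y
    simp only [hE_def]
    rw [← Real.exp_add]
    congr 1
    ring
  have hF_bound : ∀ y, |h' y| ≤ F y := by
    intro y
    have hq := abs_div_jbracket_le_one y
    have hi1 : ⟪f y, f y⟫ = ‖f y‖ ^ 2 := real_inner_self_eq_norm_sq _
    have hi2 : |⟪f y, deriv f y⟫| ≤ ‖f y‖ * ‖deriv f y‖ := abs_real_inner_le_norm _ _
    have hi3 : |⟪deriv f y, f y⟫| ≤ ‖deriv f y‖ * ‖f y‖ := abs_real_inner_le_norm _ _
    have hE0 : 0 < E y := Real.exp_pos _
    have t1 : |E y * (-(α + α₂) * (y / jbracket y)) * ⟪f y, f y⟫| ≤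
        E y * ((α + α₂) * ‖f y‖ ^ 2) := by
      rw [hi1, abs_mul, abs_mul, abs_of_pos hE0, abs_of_nonneg (sq_nonneg (‖f y‖)),
        abs_mul, abs_neg, abs_of_pos hcsum]
      calc E y * ((α + α₂) * |y / jbracket y|) * ‖f y‖ ^ 2
          ≤ E y * ((α + α₂) * 1) * ‖f y‖ ^ 2 := by gcongr
        _ = E y * ((α + α₂) * ‖f y‖ ^ 2) := by ring
    have t2 : |E y * (⟪f y, deriv f y⟫ + ⟪deriv f y, f y⟫)| ≤
        E y * (2 * (‖f y‖ * ‖deriv f y‖)) := by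
      rw [abs_mul, abs_of_pos hE0]
      have habs : |⟪f y, deriv f y⟫ + ⟪deriv f y, f y⟫| ≤ 2 * (‖f y‖ * ‖deriv f y‖) := by
        have h5 := abs_add_le ⟪f y, deriv f y⟫ ⟪deriv f y, f y⟫
        have h6 : ‖deriv f y‖ * ‖f y‖ = ‖f y‖ * ‖deriv f y‖ := mul_comm _ _
        linarith
      exact mul_le_mul_of_nonneg_left habs hE0.le
    calc |h' y| ≤ |E y * (-(α + α₂) * (y / jbracket y)) * ⟪f y, f y⟫| +
          |E y * (⟪f y, deriv f y⟫ + ⟪deriv f y, f y⟫)| := abs_add_le _ _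
      _ ≤ E y * ((α + α₂) * ‖f y‖ ^ 2) + E y * (2 * (‖f y‖ * ‖deriv f y‖)) :=
          add_le_add t1 t2
      _ = F y := by simp only [hF_def]; rw [hEsplit y]; ring
  -- square identities
  have hsqa : ∀ y, (Real.exp (-α * jbracket y) * ‖f y‖) ^ 2 =
      Real.exp (-(2 * α) * jbracket y) * ‖f y‖ ^ 2 := by
    intro y
    rw [mul_pow, exp_sq]
    have : 2 * (-α * jbracket y) = -(2 * α) * jbracket y := by ring
    rw [this]
  have hsqb : ∀ y, (Real.exp (-α₂ * jbracket y) * ‖f y‖) ^ 2 =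
      Real.exp (-(2 * α₂) * jbracket y) * ‖f y‖ ^ 2 := by
    intro y
    rw [mul_pow, exp_sq]
    have : 2 * (-α₂ * jbracket y) = -(2 * α₂) * jbracket y := by ring
    rw [this]
  have hsqb' : ∀ y, (Real.exp (-α₂ * jbracket y) * ‖deriv f y‖) ^ 2 =
      Real.exp (-(2 * α₂) * jbracket y) * ‖deriv f y‖ ^ 2 := by
    intro y
    rw [mul_pow, exp_sq]
    have : 2 * (-α₂ * jbracket y) = -(2 * α₂) * jbracket y := by ring
    rw [this]
  -- integrability facts
  have hcv : Continuous fun y => Real.exp (-(2 * α₂) * jbracket y) * ‖f y‖ ^ 2 :=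
    (Real.continuous_exp.comp (continuous_const.mul continuous_jbracket : Continuous fun y => -(2 * α₂) * jbracket y)).mul
      (hfc.norm.pow 2)
  have hv_int : Integrable (fun y => Real.exp (-(2 * α₂) * jbracket y) * ‖f y‖ ^ 2) := by
    refine hfL2.mono' hcv.aestronglyMeasurable (ae_of_all _ fun y => ?_)
    rw [Real.norm_of_nonneg (by positivity)]
    exact mul_le_mul_of_nonneg_right
      (Real.exp_le_exp.2 (by nlinarith [jbracket_nonneg y])) (sq_nonneg _)
  have hu_int : Integrable (fun y => Real.exp (-(2 * α) * jbracket y) * ‖f y‖ ^ 2)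
      (volume.restrict (Set.Ioi x)) := hfL2.restrict
  have hw_int : Integrable (fun y => Real.exp (-(2 * α₂) * jbracket y) * ‖deriv f y‖ ^ 2)
      (volume.restrict (Set.Ioi x)) := hf'L2.restrict
  have hvx_int : Integrable (fun y => Real.exp (-(2 * α₂) * jbracket y) * ‖f y‖ ^ 2)
      (volume.restrict (Set.Ioi x)) := hv_int.restrict
  have hp1_int : Integrable (fun y => (Real.exp (-α * jbracket y) * ‖f y‖) *
      (Real.exp (-α₂ * jbracket y) * ‖f y‖)) (volume.restrict (Set.Ioi x)) := by
    refine hu_int.mono' (hca.mul hcb).aestronglyMeasurable.restrict (ae_of_all _ fun y => ?_)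
    beta_reduce
    rw [Real.norm_of_nonneg (by positivity)]
    rw [← hsqa y]
    have hba : Real.exp (-α₂ * jbracket y) ≤ Real.exp (-α * jbracket y) :=
      Real.exp_le_exp.2 (by nlinarith [jbracket_nonneg y])
    have := mul_nonneg (Real.exp_pos (-α * jbracket y)).le (norm_nonneg (f y))
    calc Real.exp (-α * jbracket y) * ‖f y‖ * (Real.exp (-α₂ * jbracket y) * ‖f y‖)
        ≤ Real.exp (-α * jbracket y) * ‖f y‖ * (Real.exp (-α * jbracket y) * ‖f y‖) := by
          gcongr
      _ = (Real.exp (-α * jbracket y) * ‖f y‖) ^ 2 := (sq _).symm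
  have hp2_int : Integrable (fun y => (Real.exp (-α * jbracket y) * ‖f y‖) *
      (Real.exp (-α₂ * jbracket y) * ‖deriv f y‖)) (volume.restrict (Set.Ioi x)) := by
    refine ((hu_int.add hw_int).const_mul (1/2)).mono'
      (hca.mul hcb').aestronglyMeasurable.restrict (ae_of_all _ fun y => ?_)
    simp only [Pi.add_apply]
    rw [Real.norm_of_nonneg (by positivity)]
    rw [← hsqa y, ← hsqb' y]
    nlinarith [sq_nonneg (Real.exp (-α * jbracket y) * ‖f y‖ -
      Real.exp (-α₂ * jbracket y) * ‖deriv f y‖)]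
  have hF_int : Integrable F (volume.restrict (Set.Ioi x)) := by
    have h9 := (hp1_int.const_mul (α + α₂)).add (hp2_int.const_mul 2)
    simp only [hF_def]
    exact h9
  have hF_nonneg : ∀ y, 0 ≤ F y := by
    intro y
    simp only [hF_def]
    have h1 : (0:ℝ) ≤ (Real.exp (-α * jbracket y) * ‖f y‖) *
        (Real.exp (-α₂ * jbracket y) * ‖f y‖) := by positivity
    have h2 : (0:ℝ) ≤ (Real.exp (-α * jbracket y) * ‖f y‖) *
        (Real.exp (-α₂ * jbracket y) * ‖deriv f y‖) := by positivity
    nlinarith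
  -- integrability of h on (x, ∞)
  have hh_cont : Continuous h := hcontE.mul hcontip
  have hhval : ∀ y, h y = E y * ‖f y‖ ^ 2 := by
    intro y
    simp only [hh_def, real_inner_self_eq_norm_sq]
  have hh_nonneg : ∀ y, 0 ≤ h y := by
    intro y
    rw [hhval y]
    positivity
  have hh_int : Integrable h (volume.restrict (Set.Ioi x)) := by
    refine hu_int.mono' hh_cont.aestronglyMeasurable.restrict (ae_of_all _ fun y => ?_)
    beta_reduce
    rw [Real.norm_of_nonneg (hh_nonneg y), hhval y]
    have hee : E y ≤ Real.exp (-(2 * α) * jbracket y) := by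
      simp only [hE_def]
      exact Real.exp_le_exp.2 (by nlinarith [jbracket_nonneg y])
    exact mul_le_mul_of_nonneg_right hee (sq_nonneg _)
  -- main estimate: h x ≤ ∫_{Ioi x} F
  have hx_le : h x ≤ ∫ y in Set.Ioi x, F y := by
    refine le_of_forall_pos_le_add fun ε hε => ?_
    obtain ⟨R, hxR, hhR⟩ : ∃ R, x ≤ R ∧ h R < ε := by
      by_contra hcon
      push_neg at hcon
      have hconst : Integrable (fun _ : ℝ => ε) (volume.restrict (Set.Ioi x)) := by
        refine hh_int.mono' aestronglyMeasurable_const ?_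
        rw [ae_restrict_iff' measurableSet_Ioi]
        refine ae_of_all _ fun y hy => ?_
        rw [Real.norm_of_nonneg hε.le]
        exact hcon y (le_of_lt hy)
      rw [integrable_const_iff] at hconst
      rcases hconst with h0 | hfin
      · exact absurd h0 hε.ne'
      · rw [isFiniteMeasure_restrict, Real.volume_Ioi] at hfin
        exact absurd hfin (by simp)
    have hFTC : ∫ t in x..R, h' t = h R - h x :=
      intervalIntegral.integral_eq_sub_of_hasDerivAt (fun t _ => hhd t)
        (hcont_h'.intervalIntegrable x R)
    have habs : |∫ t in x..R, h' t| ≤ ∫ t in x..R, |h' t| :=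
      intervalIntegral.abs_integral_le_integral_abs hxR
    have hmono : ∫ t in x..R, |h' t| ≤ ∫ t in x..R, F t :=
      intervalIntegral.integral_mono_on hxR (hcont_h'.abs.intervalIntegrable x R)
        (hcontF.intervalIntegrable x R) fun t _ => hF_bound t
    have htail : ∫ t in x..R, F t ≤ ∫ y in Set.Ioi x, F y := by
      rw [intervalIntegral.integral_of_le hxR]
      exact setIntegral_mono_set hF_int (ae_of_all _ hF_nonneg)
        (HasSubset.Subset.eventuallyLE Set.Ioc_subset_Ioi_self)
    have hneg := neg_abs_le (∫ t in x..R, h' t)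
    linarith
  -- Cauchy–Schwarz
  have hcs1 : ∫ y in Set.Ioi x, (Real.exp (-α * jbracket y) * ‖f y‖) *
        (Real.exp (-α₂ * jbracket y) * ‖f y‖) ≤
      Real.sqrt (∫ y in Set.Ioi x, Real.exp (-(2 * α) * jbracket y) * ‖f y‖ ^ 2) *
        Real.sqrt (∫ y in Set.Ioi x, Real.exp (-(2 * α₂) * jbracket y) * ‖f y‖ ^ 2) := by
    have h := cs_integral (μ := volume.restrict (Set.Ioi x))
      hca.aestronglyMeasurable.restrict hcb.aestronglyMeasurable.restrict
      (fun y => by positivity) (fun y => by positivity)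
      (by simp only [hsqa]; exact hu_int) (by simp only [hsqb]; exact hvx_int)
    simpa only [hsqa, hsqb] using h
  have hcs2 : ∫ y in Set.Ioi x, (Real.exp (-α * jbracket y) * ‖f y‖) *
        (Real.exp (-α₂ * jbracket y) * ‖deriv f y‖) ≤
      Real.sqrt (∫ y in Set.Ioi x, Real.exp (-(2 * α) * jbracket y) * ‖f y‖ ^ 2) *
        Real.sqrt (∫ y in Set.Ioi x, Real.exp (-(2 * α₂) * jbracket y) * ‖deriv f y‖ ^ 2) := by
    have h := cs_integral (μ := volume.restrict (Set.Ioi x))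
      hca.aestronglyMeasurable.restrict hcb'.aestronglyMeasurable.restrict
      (fun y => by positivity) (fun y => by positivity)
      (by simp only [hsqa]; exact hu_int) (by simp only [hsqb']; exact hw_int)
    simpa only [hsqa, hsqb'] using h
  -- splitting the integral of F
  have hsplit : ∫ y in Set.Ioi x, F y =
      (α + α₂) * (∫ y in Set.Ioi x, (Real.exp (-α * jbracket y) * ‖f y‖) *
        (Real.exp (-α₂ * jbracket y) * ‖f y‖)) +
      2 * (∫ y in Set.Ioi x, (Real.exp (-α * jbracket y) * ‖f y‖) *
        (Real.exp (-α₂ * jbracket y) * ‖deriv f y‖)) := by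
    simp only [hF_def]
    rw [integral_add (hp1_int.const_mul (α + α₂)) (hp2_int.const_mul 2),
      integral_const_mul, integral_const_mul]
  -- abbreviate the three square roots
  set sA := Real.sqrt (∫ y in Set.Ioi x, Real.exp (-(2 * α) * jbracket y) * ‖f y‖ ^ 2)
  set sB := Real.sqrt (∫ y in Set.Ioi x, Real.exp (-(2 * α₂) * jbracket y) * ‖deriv f y‖ ^ 2)
  set sC := Real.sqrt (∫ y in Set.Ioi x, Real.exp (-(2 * α₂) * jbracket y) * ‖f y‖ ^ 2)
  have hsA : 0 ≤ sA := Real.sqrt_nonneg _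
  have hsB : 0 ≤ sB := Real.sqrt_nonneg _
  have hsC : 0 ≤ sC := Real.sqrt_nonneg _
  have hsum : h x ≤ (α + α₂) * (sA * sC) + 2 * (sA * sB) := by
    calc h x ≤ ∫ y in Set.Ioi x, F y := hx_le
      _ = _ := hsplit
      _ ≤ (α + α₂) * (sA * sC) + 2 * (sA * sB) :=
          add_le_add (mul_le_mul_of_nonneg_left hcs1 hcsum.le)
            (mul_le_mul_of_nonneg_left hcs2 (by norm_num))
  have hfinal : h x ≤ 2 * sA * (sB + α₂ * sC) := by
    nlinarith [mul_nonneg hsA hsC]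
  have hhx : h x = Real.exp (-(α + α₂) * jbracket x) * ‖f x‖ ^ 2 := by
    simp only [hhval x, hE_def]
  have hdecomp : Real.exp (-(2 * α₂) * jbracket x) =
      Real.exp (-(α₂ - α) * jbracket x) * Real.exp (-(α + α₂) * jbracket x) := by
    rw [← Real.exp_add]
    congr 1
    ring
  calc Real.exp (-(2 * α₂) * jbracket x) * ‖f x‖ ^ 2
      = Real.exp (-(α₂ - α) * jbracket x) * h x := by rw [hdecomp, hhx]; ring
    _ ≤ Real.exp (-(α₂ - α) * jbracket x) * (2 * sA * (sB + α₂ * sC)) :=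
        mul_le_mul_of_nonneg_left hfinal (Real.exp_pos _).le
    _ = 2 * Real.exp (-(α₂ - α) * jbracket x) * sA * (sB + α₂ * sC) := by ring
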